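/- Let s > 0 and let P satisfy H1 and H2. If γ is a positive solution of the Dyson–Schwinger ODE on the whole interval [x₀, ∞) for some x₀ > 0, then γ(x) > γ_c(x) for every x ≥ x₀; that is, every global positive solution stays strictly above the nullcline. -/

import Mathlib

open Real MeasureTheory Filter Set
open Topology

noncomputable section

/-- `γ` is a positive solution of the Dyson–Schwinger ODE
`γ'(x) = (γ(x) + γ(x)² − P(x)) / (s·x·γ(x))` on the set `I`. -/
def IsDSSolution (s : ℝ) (P γ : ℝ → ℝ) (I : Set ℝ) : Prop :=
  (∀ x ∈ I, 0 < γ x) ∧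
    ∀ x ∈ I, HasDerivWithinAt γ ((γ x + (γ x) ^ 2 - P x) / (s * x * γ x)) I x

/-- Hypothesis H1: `P` is twice continuously differentiable on `[0,∞)`,
`P 0 = 0`, and `P x > 0` for `x > 0`. -/
def H1 (P : ℝ → ℝ) : Prop :=
  ContDiffOn ℝ 2 P (Set.Ici 0) ∧ P 0 = 0 ∧ ∀ x > (0 : ℝ), 0 < P x

/-- Hypothesis H2: `P` is strictly increasing on `[0,∞)`. -/
def H2 (P : ℝ → ℝ) : Prop := StrictMonoOn P (Set.Ici 0)

/-- The nullcline `γ_c(x) = (√(1 + 4 P x) − 1)/2`. -/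
def gammaC (P : ℝ → ℝ) (x : ℝ) : ℝ := (Real.sqrt (1 + 4 * P x) - 1) / 2

set_option maxHeartbeats 2000000 in
theorem stmt_11 (s : ℝ) (hs : 0 < s) (P : ℝ → ℝ) (hP1 : H1 P) (hP2 : H2 P)
    (x₀ : ℝ) (hx₀ : 0 < x₀) (γ : ℝ → ℝ)
    (hγ : IsDSSolution s P γ (Set.Ici x₀)) :
    ∀ x ≥ x₀, gammaC P x < γ x := by
  obtain ⟨hPc2, hP0, hPpos⟩ := hP1
  obtain ⟨hpos, hderiv⟩ := hγ
  have hγcont : ContinuousOn γ (Ici x₀) := fun x hx => (hderiv x hx).continuousWithinAt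
  have hPcont : ContinuousOn P (Ici 0) := hPc2.continuousOn
  -- P is differentiable at every x > 0
  have hPdiff : ∀ x : ℝ, 0 < x → HasDerivAt P (deriv P x) x := by
    intro x hx
    have h1 : DifferentiableOn ℝ P (Ici 0) := hPc2.differentiableOn two_ne_zero
    have h2 : DifferentiableAt ℝ P x := h1.differentiableAt (Ici_mem_nhds hx)
    exact h2.hasDerivAt
  have hPmono : ∀ a b : ℝ, 0 ≤ a → a ≤ b → P a ≤ P b := fun a b ha hab =>
    hP2.monotoneOn ha (le_trans ha hab) hab
  -- derivative of P is nonnegative on (0, ∞)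
  have hP'nonneg : ∀ x : ℝ, 0 < x → 0 ≤ deriv P x := by
    intro x hx
    have hd := ((hPdiff x hx).hasDerivWithinAt (s := Ioi x))
    rw [hasDerivWithinAt_iff_tendsto_slope] at hd
    have hI : Ioi x \ {x} = Ioi x := Set.diff_singleton_eq_self (by simp)
    rw [hI] at hd
    refine ge_of_tendsto hd ?_
    filter_upwards [self_mem_nhdsWithin] with y hy
    have hxy : x < y := hy
    have hPlt : P x < P y := hP2 (le_of_lt hx) (le_of_lt (lt_trans hx hxy)) hxy
    rw [slope_def_field]
    have : (0:ℝ) < (P y - P x) / (y - x) := div_pos (by linarith) (by linarith)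
    -- slope in field: (P y - P x) / (y - x)
    simpa [div_eq_div_iff] using le_of_lt this
  -- the ODE derivative at interior points as a true derivative
  have hγderivAt : ∀ x : ℝ, x₀ < x →
      HasDerivAt γ ((γ x + (γ x) ^ 2 - P x) / (s * x * γ x)) x := by
    intro x hx
    exact (hderiv x (le_of_lt hx)).hasDerivAt (Ici_mem_nhds hx)
  -- Main claim: γ stays strictly above the nullcline in the sense γ + γ² > P
  have key : ∀ x ≥ x₀, P x < γ x + γ x ^ 2 := by
    by_contra hcon
    push_neg at hcon
    obtain ⟨x₁, hx₁, hw₁⟩ := hcon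
    have hx₁pos : 0 < x₁ := lt_of_lt_of_le hx₀ hx₁
    -- Step A : γ + γ² - P ≤ 0 for all x ≥ x₁
    have stepA : ∀ x ≥ x₁, γ x + γ x ^ 2 - P x ≤ 0 := by
      by_contra hA
      push_neg at hA
      obtain ⟨x₂, hx₂, hwx₂⟩ := hA
      set w : ℝ → ℝ := fun x => γ x + γ x ^ 2 - P x with hw_def
      have hwx₁ : w x₁ ≤ 0 := by simp [hw_def]; linarith
      have hx₁x₂ : x₁ < x₂ := by
        rcases lt_or_eq_of_le hx₂ with h | h
        · exact h
        · exfalso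
          have h2 : γ x₂ + γ x₂ ^ 2 - P x₂ ≤ 0 := by rw [← h]; exact hwx₁
          linarith
      have hIccsub : Icc x₁ x₂ ⊆ Ici x₀ := fun y hy => le_trans hx₁ hy.1
      have hIccsub0 : Icc x₁ x₂ ⊆ Ici 0 := fun y hy =>
        le_of_lt (lt_of_lt_of_le hx₁pos hy.1)
      have hwcont : ContinuousOn w (Icc x₁ x₂) := by
        have h1 : ContinuousOn γ (Icc x₁ x₂) := hγcont.mono hIccsub
        have h2 : ContinuousOn P (Icc x₁ x₂) := hPcont.mono hIccsub0
        exact (h1.add (h1.pow 2)).sub h2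
      set S : Set ℝ := Icc x₁ x₂ ∩ w ⁻¹' (Iic 0) with hS_def
      have hSclosed : IsClosed S :=
        hwcont.preimage_isClosed_of_isClosed isClosed_Icc isClosed_Iic
      have hx₁S : x₁ ∈ S := ⟨⟨le_refl _, le_of_lt hx₁x₂⟩, hwx₁⟩
      have hSbdd : BddAbove S := (bddAbove_Icc).mono inter_subset_left
      set c := sSup S with hc_def
      have hcS : c ∈ S := hSclosed.csSup_mem ⟨x₁, hx₁S⟩ hSbdd
      have hcx₁ : x₁ ≤ c := hcS.1.1
      have hcx₂ : c < x₂ := by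
        rcases lt_or_eq_of_le hcS.1.2 with h | h
        · exact h
        · exfalso
          have h2 : γ x₂ + γ x₂ ^ 2 - P x₂ ≤ 0 := by
            have := hcS.2; rw [h] at this; exact this
          linarith
      have hcx₀ : x₀ ≤ c := le_trans hx₁ hcx₁
      have hcpos : 0 < c := lt_of_lt_of_le hx₁pos hcx₁
      have hwpos : ∀ y ∈ Ioc c x₂, 0 < w y := by
        intro y hy
        by_contra h
        push_neg at h
        have hyS : y ∈ S := ⟨⟨le_trans hcx₁ (le_of_lt hy.1), hy.2⟩, h⟩
        exact absurd (le_csSup hSbdd hyS) (not_le.2 hy.1)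
      -- w c = 0
      have hwc_le : w c ≤ 0 := hcS.2
      have hwc_ge : 0 ≤ w c := by
        have hmem : Ioc c x₂ ∈ 𝓝[>] c := Ioc_mem_nhdsGT hcx₂
        have hmem2 : Icc x₁ x₂ ∈ 𝓝[>] c :=
          mem_of_superset hmem (fun y hy => ⟨le_trans hcx₁ (le_of_lt hy.1), hy.2⟩)
        have htend : Tendsto w (𝓝[>] c) (𝓝 (w c)) :=
          (hwcont c hcS.1).mono_left (nhdsWithin_le_of_mem hmem2)
        refine ge_of_tendsto htend ?_
        filter_upwards [hmem] with y hy using le_of_lt (hwpos y hy)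
      have hwc : w c = 0 := le_antisymm hwc_le hwc_ge
      -- bounds
      obtain ⟨M, hM⟩ := isCompact_Icc.exists_bound_of_continuousOn
        (hγcont.mono hIccsub)
      have hMγ : ∀ y ∈ Icc x₁ x₂, γ y ≤ M := fun y hy =>
        le_of_abs_le (by simpa [Real.norm_eq_abs] using hM y hy)
      have hM0 : 0 ≤ M := le_trans (abs_nonneg _) (by
        simpa [Real.norm_eq_abs] using hM x₁ ⟨le_refl _, le_of_lt hx₁x₂⟩)
      have hPx₁pos : 0 < P x₁ := hPpos x₁ hx₁pos
      set c₀ : ℝ := min 1 (P x₁ / 2) with hc₀_def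
      have hc₀pos : 0 < c₀ := lt_min one_pos (by linarith)
      have hγlb : ∀ y, x₁ ≤ y → 0 ≤ w y → c₀ ≤ γ y := by
        intro y hy hwy
        have hgy : 0 < γ y := hpos y (le_trans hx₁ hy)
        have hPy : P x₁ ≤ P y := hPmono x₁ y (le_of_lt hx₁pos) hy
        have hsum : P x₁ ≤ γ y + γ y ^ 2 := by simp [hw_def] at hwy; linarith
        rcases le_or_gt 1 (γ y) with h | h
        · exact le_trans (min_le_left _ _) h
        · have : P x₁ ≤ 2 * γ y := by nlinarith
          exact le_trans (min_le_right _ _) (by linarith)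
      set L : ℝ := (1 + 2 * M) / (s * x₁ * c₀) with hL_def
      have hdenpos : 0 < s * x₁ * c₀ := by positivity
      -- the derivative of w
      set W' : ℝ → ℝ := fun x =>
        (1 + 2 * γ x) * ((γ x + γ x ^ 2 - P x) / (s * x * γ x)) - deriv P x
        with hW'_def
      have hwderiv : ∀ x ∈ Ico c x₂, HasDerivWithinAt w (W' x) (Ici x) x := by
        intro x hx
        have hxx₀ : x₀ ≤ x := le_trans hcx₀ hx.1
        have hxpos : 0 < x := lt_of_lt_of_le hx₀ hxx₀
        have hγd : HasDerivWithinAt γ ((γ x + γ x ^ 2 - P x) / (s * x * γ x))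
            (Ici x) x := (hderiv x hxx₀).mono (Ici_subset_Ici.2 hxx₀)
        have hsq := hγd.pow 2
        have hsum := hγd.add hsq
        have hPd : HasDerivWithinAt P (deriv P x) (Ici x) x :=
          (hPdiff x hxpos).hasDerivWithinAt
        have := hsum.sub hPd
        have hfun : w = γ + γ ^ 2 - P := by funext y; simp [hw_def]
        rw [hfun]
        refine this.congr_deriv ?_
        simp [hW'_def]
        ring
      -- bound the derivative
      have hbound : ∀ x ∈ Ico c x₂, W' x ≤ L * w x + 0 := by
        intro x hx
        have hxx₁ : x₁ ≤ x := le_trans hcx₁ hx.1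
        have hxx₀ : x₀ ≤ x := le_trans hcx₀ hx.1
        have hxpos : 0 < x := lt_of_lt_of_le hx₀ hxx₀
        have hgx : 0 < γ x := hpos x hxx₀
        have hw0 : 0 ≤ w x := by
          rcases eq_or_lt_of_le hx.1 with h | h
          · rw [← h]; exact hwc_ge
          · exact le_of_lt (hwpos x ⟨h, le_of_lt hx.2⟩)
        have hγub : γ x ≤ M := hMγ x ⟨hxx₁, le_of_lt hx.2⟩
        have hγlb' : c₀ ≤ γ x := hγlb x hxx₁ hw0
        have hden : s * x₁ * c₀ ≤ s * x * γ x := by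
          nlinarith [mul_nonneg (mul_nonneg hs.le hc₀pos.le) (sub_nonneg.2 hxx₁),
            mul_nonneg (mul_nonneg hs.le hxpos.le) (sub_nonneg.2 hγlb')]
        have hnum : (1 + 2 * γ x) * w x ≤ (1 + 2 * M) * w x := by nlinarith
        have hdiv : (1 + 2 * γ x) * w x / (s * x * γ x)
            ≤ (1 + 2 * M) * w x / (s * x₁ * c₀) := by
          apply div_le_div₀ (by nlinarith) hnum hdenpos hden
        have hP' : 0 ≤ deriv P x := hP'nonneg x hxpos
        have heq1 : (1 + 2 * γ x) * ((γ x + γ x ^ 2 - P x) / (s * x * γ x))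
            = (1 + 2 * γ x) * w x / (s * x * γ x) := by
          simp [hw_def]; ring
        have heq2 : (1 + 2 * M) * w x / (s * x₁ * c₀) = L * w x := by
          rw [hL_def, div_mul_eq_mul_div]
        simp only [hW'_def]
        rw [heq1]
        linarith [hdiv, heq2.le, heq2.ge]
      -- Grönwall
      have hwcont' : ContinuousOn w (Icc c x₂) :=
        hwcont.mono (Icc_subset_Icc_left hcx₁)
      have hliminf : ∀ x ∈ Ico c x₂, ∀ r, W' x < r →
          ∃ᶠ z in 𝓝[>] x, (z - x)⁻¹ * (w z - w x) < r := by
        intro x hx r hr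
        exact (hwderiv x hx).liminf_right_slope_le hr
      have hgron := le_gronwallBound_of_liminf_deriv_right_le hwcont' hliminf
        (by rw [hwc] : w c ≤ (0:ℝ)) hbound x₂ ⟨le_of_lt hcx₂, le_refl _⟩
      rw [gronwallBound_ε0_δ0] at hgron
      exact absurd hgron (not_le.2 hwx₂)
    -- Step B : derive a contradiction
    have hγanti : AntitoneOn γ (Ici x₁) := by
      apply antitoneOn_of_deriv_nonpos (convex_Ici x₁)
        (hγcont.mono (Ici_subset_Ici.2 hx₁))
      · intro x hx
        rw [interior_Ici] at hx
        have hx' : x₀ < x := lt_of_le_of_lt hx₁ hx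
        exact (hγderivAt x hx').differentiableAt.differentiableWithinAt
      · intro x hx
        rw [interior_Ici] at hx
        have hx' : x₀ < x := lt_of_le_of_lt hx₁ hx
        have hd := hγderivAt x hx'
        rw [hd.deriv]
        have hgx : 0 < γ x := hpos x (le_of_lt hx')
        have hxpos : 0 < x := lt_trans hx₀ hx'
        have hwle : γ x + γ x ^ 2 - P x ≤ 0 := stepA x (le_of_lt hx)
        exact div_nonpos_of_nonpos_of_nonneg hwle (by positivity)
    set x₂ := x₁ + 1 with hx₂_def
    set x₃ := x₁ + 2 with hx₃_def
    have hx₂pos : 0 < x₂ := by linarith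
    have hx₃pos : 0 < x₃ := by linarith
    set δ := P x₃ - P x₂ with hδ_def
    have hδpos : 0 < δ := by
      have := hP2 (le_of_lt hx₂pos) (le_of_lt hx₃pos) (by linarith : x₂ < x₃)
      linarith
    have hB : ∀ x ≥ x₃, γ x + γ x ^ 2 - P x ≤ -δ := by
      intro x hx
      have hxx₂ : x₂ ≤ x := by linarith
      have hγle : γ x ≤ γ x₂ := hγanti (by simp [hx₂_def] : x₂ ∈ Ici x₁)
        (by simp only [mem_Ici]; linarith) hxx₂
      have hgx : 0 < γ x := hpos x (by simp only [mem_Ici]; linarith)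
      have hgx₂ : 0 < γ x₂ := hpos x₂ (by simp only [mem_Ici]; linarith)
      have h1 : γ x + γ x ^ 2 ≤ γ x₂ + γ x₂ ^ 2 := by nlinarith
      have h2 : γ x₂ + γ x₂ ^ 2 ≤ P x₂ := by
        have := stepA x₂ (by linarith); linarith
      have h3 : P x₃ ≤ P x := hPmono x₃ x (le_of_lt hx₃pos) hx
      simp only [hδ_def]; linarith
    set v : ℝ → ℝ := fun x => γ x ^ 2 / 2 + (δ / s) * Real.log x with hv_def
    have hvanti : AntitoneOn v (Ici x₃) := by
      apply antitoneOn_of_deriv_nonpos (convex_Ici x₃)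
      · have h1 : ContinuousOn γ (Ici x₃) := hγcont.mono (Ici_subset_Ici.2 (by linarith))
        have h2 : ContinuousOn Real.log (Ici x₃) :=
          Real.continuousOn_log.mono (fun y hy => by
            simp only [mem_compl_iff, mem_singleton_iff]
            intro h; rw [h] at hy; simp only [mem_Ici] at hy; linarith)
        exact ((h1.pow 2).div_const 2).add (h2.const_smul (δ / s) |>.congr
          (fun y _ => by simp [smul_eq_mul]))
      · intro x hx
        rw [interior_Ici] at hx
        have hx' : x₀ < x := by simp only [mem_Ioi] at hx; linarith
        have hxpos : 0 < x := lt_trans hx₀ hx'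
        have hγd := hγderivAt x hx'
        exact ((((hγd.pow 2).div_const 2).add
          ((Real.hasDerivAt_log (ne_of_gt hxpos)).const_mul (δ / s))).differentiableAt).differentiableWithinAt
      · intro x hx
        rw [interior_Ici] at hx
        simp only [mem_Ioi] at hx
        have hx' : x₀ < x := by linarith
        have hxpos : 0 < x := lt_trans hx₀ hx'
        have hgx : 0 < γ x := hpos x (le_of_lt hx')
        have hγd := hγderivAt x hx'
        have hvd : HasDerivAt v
            ((2 : ℕ) * γ x ^ 1 * ((γ x + γ x ^ 2 - P x) / (s * x * γ x)) / 2
              + (δ / s) * x⁻¹) x :=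
          ((hγd.pow 2).div_const 2).add
            ((Real.hasDerivAt_log (ne_of_gt hxpos)).const_mul (δ / s))
        rw [hvd.deriv]
        have heq : (2 : ℕ) * γ x ^ 1 * ((γ x + γ x ^ 2 - P x) / (s * x * γ x)) / 2
            = (γ x + γ x ^ 2 - P x) / (s * x) := by
          field_simp; ring
        rw [heq]
        have hwle : γ x + γ x ^ 2 - P x ≤ -δ := hB x (le_of_lt hx)
        have h1 : (γ x + γ x ^ 2 - P x) / (s * x) ≤ -δ / (s * x) := by
          apply div_le_div_of_nonneg_right hwle (by positivity) |>.trans_eq rfl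
        have h2 : -δ / (s * x) + (δ / s) * x⁻¹ = 0 := by field_simp; ring
        linarith
    -- choose a large point to get the contradiction
    set X := max x₃ (Real.exp ((v x₃ + 1) * (s / δ))) with hX_def
    have hXx₃ : x₃ ≤ X := le_max_left _ _
    have hXexp : Real.exp ((v x₃ + 1) * (s / δ)) ≤ X := le_max_right _ _
    have hXpos : 0 < X := lt_of_lt_of_le hx₃pos hXx₃
    clear_value x₂ x₃ δ v X
    have hvle : v X ≤ v x₃ := hvanti (by simp) (by simpa using hXx₃) hXx₃
    have hlog : (v x₃ + 1) * (s / δ) ≤ Real.log X := by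
      calc (v x₃ + 1) * (s / δ) = Real.log (Real.exp ((v x₃ + 1) * (s / δ))) :=
            (Real.log_exp _).symm
        _ ≤ Real.log X := Real.log_le_log (Real.exp_pos _) hXexp
    have hvX : v x₃ + 1 ≤ v X := by
      have h1 : (δ / s) * ((v x₃ + 1) * (s / δ)) ≤ (δ / s) * Real.log X :=
        mul_le_mul_of_nonneg_left hlog (by positivity)
      have hss : δ / s * (s / δ) = 1 := by
        field_simp
      have h2 : (δ / s) * ((v x₃ + 1) * (s / δ)) = v x₃ + 1 := by
        calc (δ / s) * ((v x₃ + 1) * (s / δ)) = (v x₃ + 1) * (δ / s * (s / δ)) := by ring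
          _ = v x₃ + 1 := by rw [hss, mul_one]
      have h3 : γ X ^ 2 / 2 ≥ 0 := by positivity
      have h4 : (δ / s) * Real.log X ≤ v X := by
        simp only [hv_def]; linarith
      linarith
    linarith
  -- conclude: γ_c < γ
  intro x hx
  have hp := key x hx
  have hg := hpos x hx
  unfold gammaC
  rw [div_lt_iff₀ (by norm_num : (0:ℝ) < 2)]
  have h2 : Real.sqrt (1 + 4 * P x) < 2 * γ x + 1 := by
    rw [Real.sqrt_lt' (by positivity)]
    nlinarith
  linarith
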